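/- Let E = EuclideanSpace ℝ (Fin d), J : E → ℝ differentiable with L̂-Lipschitz gradient (L̂ ≥ 0), λ > L̂, and for w ∈ E let θ̂(w) be the unique global maximizer of θ ↦ J(θ) − (λ/2)‖θ − w‖². Then for every θ̃ ∈ E, the distance to the maximizer is controlled by the residual gradient: ‖θ̃ − θ̂(w)‖ ≤ ‖∇J(θ̃) − λ(θ̃ − w)‖ / (λ − L̂). -/

import Mathlib

open InnerProductSpace

/-- Distance to the maximizer of the inner Moreau objective is controlled by
the residual gradient: `‖θ̃ − θ̂(w)‖ ≤ ‖∇J(θ̃) − λ(θ̃ − w)‖ / (λ − L̂)`. -/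
theorem moreau_distance_to_maximizer_bound
    (d : ℕ) (hd : 0 < d)
    (J : EuclideanSpace ℝ (Fin d) → ℝ) (Lhat lam : ℝ)
    (hLhat : 0 ≤ Lhat) (hJ : Differentiable ℝ J)
    (hLip : ∀ x y, ‖gradient J x - gradient J y‖ ≤ Lhat * ‖x - y‖)
    (hlam : Lhat < lam)
    (w : EuclideanSpace ℝ (Fin d))
    (θhat : EuclideanSpace ℝ (Fin d))
    (hθhat : ∀ θ : EuclideanSpace ℝ (Fin d),
      J θ - lam / 2 * ‖θ - w‖ ^ 2 ≤ J θhat - lam / 2 * ‖θhat - w‖ ^ 2) :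
    ∀ θtil : EuclideanSpace ℝ (Fin d),
      ‖θtil - θhat‖ ≤ ‖gradient J θtil - lam • (θtil - w)‖ / (lam - Lhat) := by
  let E := EuclideanSpace ℝ (Fin d)
  -- derivative of the squared distance
  have hsub : HasFDerivAt (fun θ : E => θ - w) (ContinuousLinearMap.id ℝ E) θhat :=
    (hasFDerivAt_id θhat).sub_const w
  have hinner : HasFDerivAt (fun θ : E => (inner ℝ (θ - w) (θ - w) : ℝ))
      ((fderivInnerCLM ℝ (θhat - w, θhat - w)).comp
        ((ContinuousLinearMap.id ℝ E).prod (ContinuousLinearMap.id ℝ E))) θhat :=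
    hsub.inner ℝ hsub
  have hsq : HasFDerivAt (fun θ : E => ‖θ - w‖ ^ 2)
      ((fderivInnerCLM ℝ (θhat - w, θhat - w)).comp
        ((ContinuousLinearMap.id ℝ E).prod (ContinuousLinearMap.id ℝ E))) θhat := by
    simpa only [real_inner_self_eq_norm_sq] using hinner
  have hJ' : HasFDerivAt J ((toDual ℝ E) (gradient J θhat)) θhat :=
    ((hJ θhat).hasGradientAt).hasFDerivAt
  have hg : HasFDerivAt (fun θ : E => J θ - lam / 2 * ‖θ - w‖ ^ 2)
      ((toDual ℝ E) (gradient J θhat) -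
        (lam / 2) • ((fderivInnerCLM ℝ (θhat - w, θhat - w)).comp
          ((ContinuousLinearMap.id ℝ E).prod (ContinuousLinearMap.id ℝ E)))) θhat :=
    hJ'.sub (hsq.const_mul (lam / 2))
  have hmax : IsLocalMax (fun θ : E => J θ - lam / 2 * ‖θ - w‖ ^ 2) θhat :=
    Filter.Eventually.of_forall hθhat
  have hzero := hmax.hasFDerivAt_eq_zero hg
  -- first order condition: gradient J θhat = lam • (θhat - w)
  have key : gradient J θhat = lam • (θhat - w) := by
    apply ext_inner_right ℝ
    intro v
    have := congrArg (fun (f : E →L[ℝ] ℝ) => f v) hzero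
    simp only [ContinuousLinearMap.sub_apply, ContinuousLinearMap.smul_apply,
      ContinuousLinearMap.comp_apply, ContinuousLinearMap.prod_apply,
      ContinuousLinearMap.id_apply, fderivInnerCLM_apply, toDual_apply_apply,
      ContinuousLinearMap.zero_apply, smul_eq_mul] at this
    rw [real_inner_smul_left]
    rw [real_inner_comm (θhat - w) v] at this
    linarith
  intro θtil
  set δ := θtil - θhat with hδ
  set r := gradient J θtil - lam • (θtil - w) with hrdef
  have hr : lam • δ = (gradient J θtil - gradient J θhat) - r := by
    rw [hrdef, key, hδ]; module
  have h1 : lam * ‖δ‖ ≤ Lhat * ‖δ‖ + ‖r‖ := by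
    calc lam * ‖δ‖ = ‖lam • δ‖ := by
          rw [norm_smul, Real.norm_eq_abs, abs_of_pos (lt_of_le_of_lt hLhat hlam)]
      _ ≤ ‖gradient J θtil - gradient J θhat‖ + ‖r‖ := by
          rw [hr]; exact norm_sub_le _ _
      _ ≤ Lhat * ‖δ‖ + ‖r‖ := by
          have := hLip θtil θhat; rw [← hδ] at this; linarith
  have hpos : 0 < lam - Lhat := sub_pos.mpr hlam
  rw [le_div_iff₀ hpos]
  nlinarith [norm_nonneg δ, norm_nonneg r]
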